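/- The element Δ = Π_n(s_1,...,s_n), characterized by having diagonal part diag(q,...,q) under the monomial representation, is a Garside element of the structure monoid: it is balanced (left and right divisor sets coincide), its set of divisors is finite of cardinality 2^n, and its divisors generate the monoid. -/

import Mathlib

/-- Dehornoy's `Ω` expression: `Omega op k t` is `Ω_{k+1}(t 0, …, t k)`,
defined by `Ω_1(x) = x` and
`Ω_k(x_1,…,x_k) = Ω_{k-1}(x_1,…,x_{k-1}) * Ω_{k-1}(x_1,…,x_{k-2},x_k)`. -/
def Omega {S : Type*} (op : S → S → S) : (k : ℕ) → (Fin (k + 1) → S) → S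
  | 0, t => t 0
  | k + 1, t =>
      op (Omega op k fun i => t i.castSucc)
        (Omega op k fun i =>
          if i = Fin.last k then t (Fin.last (k + 1)) else t i.castSucc)

/-- Dehornoy's `Π` expression: `PiExpr op ι k t = ι(Ω_1(t_1)) ⋯ ι(Ω_k(t_1,…,t_k))`. -/
def PiExpr {S M : Type*} [Monoid M] (op : S → S → S) (ι : S → M) :
    (k : ℕ) → (Fin k → S) → M
  | 0, _ => 1
  | k + 1, t => PiExpr op ι k (fun i => t i.castSucc) * ι (Omega op k t)

/-- The defining relations of the structure monoid: `s (s*t) = t (t*s)`. -/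
def csRel {S : Type*} (op : S → S → S) (a b : FreeMonoid S) : Prop :=
  ∃ s t : S, a = FreeMonoid.of s * FreeMonoid.of (op s t) ∧
    b = FreeMonoid.of t * FreeMonoid.of (op t s)

/-- The structure monoid `⟨S ∣ s(s*t) = t(t*s)⟩⁺` of a cycle set. -/
abbrev StructureMonoid {S : Type*} (op : S → S → S) := (conGen (csRel op)).Quotient

/-- The canonical generators of the structure monoid. -/
def mkM {S : Type*} (op : S → S → S) (s : S) : StructureMonoid op :=
  (conGen (csRel op)).mk' (FreeMonoid.of s)

/-- The permutation matrix of `σ`: row `i` has a `1` in column `σ i`. -/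
def Pmat {ι : Type*} [DecidableEq ι] (R : Type*) [Semiring R] (σ : Equiv.Perm ι) :
    Matrix ι ι R := Matrix.of fun i j => if j = σ i then 1 else 0

/-- The diagonal matrix `D_s = diag(1,…,q,…,1)` with `q` in position `s`. -/
noncomputable def Dmat {S : Type*} [DecidableEq S] (s : S) : Matrix S S (Polynomial ℚ) :=
  Matrix.diagonal fun t => if t = s then Polynomial.X else 1

/-- The permutation `ψ(s) : t ↦ s * t` attached to an element of a cycle set. -/
noncomputable def psi {S : Type*} (op : S → S → S) (hbij : ∀ s : S, Function.Bijective (op s))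
    (s : S) : Equiv.Perm S := Equiv.ofBijective (op s) (hbij s)

/-- The monomial matrix `Θ(s) = D_s P_{ψ(s)}` associated to a generator. -/
noncomputable def theta {S : Type*} [Fintype S] [DecidableEq S] (op : S → S → S)
    (hbij : ∀ s : S, Function.Bijective (op s)) (s : S) : Matrix S S (Polynomial ℚ) :=
  Dmat s * Pmat (Polynomial ℚ) (psi op hbij s)

namespace GarAux

open scoped Classical
set_option linter.unusedSectionVars false

@[ext]
structure GM (S : Type*) where
  vec : S → ℕ
  perm : Equiv.Perm S

instance {S : Type*} : Monoid (GM S) where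
  mul a b := ⟨fun i => a.vec i + b.vec (a.perm i), a.perm.trans b.perm⟩
  one := ⟨fun _ => 0, Equiv.refl S⟩
  mul_assoc a b c := by
    ext i
    · exact add_assoc _ _ _
    · rfl
  one_mul a := by
    ext i
    · exact zero_add _
    · rfl
  mul_one a := by ext i <;> rfl

variable {S : Type*} [Fintype S] [DecidableEq S] (op : S → S → S)
  (hbij : ∀ s : S, Function.Bijective (op s))
  (hcs : ∀ s t u : S, op (op s t) (op s u) = op (op t s) (op t u))

lemma psi_apply (s t : S) : psi op hbij s t = op s t := rfl

/-- indicator vector -/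
def ee (s : S) : S → ℕ := fun t => if t = s then 1 else 0

@[simp] lemma mul_vec' (a b : GM S) : (a * b).vec = fun i => a.vec i + b.vec (a.perm i) := rfl
@[simp] lemma mul_perm' (a b : GM S) : (a * b).perm = a.perm.trans b.perm := rfl
@[simp] lemma one_vec' : (1 : GM S).vec = fun _ => 0 := rfl
@[simp] lemma one_perm' : (1 : GM S).perm = Equiv.refl S := rfl

noncomputable def gen (s : S) : GM S := ⟨ee s, psi op hbij s⟩

include hcs in
lemma psi_braid (s t : S) :
    (psi op hbij s).trans (psi op hbij (op s t)) =
      (psi op hbij t).trans (psi op hbij (op t s)) := by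
  apply Equiv.ext
  intro i
  exact hcs s t i

include hcs in
lemma gen_rel (s t : S) :
    gen op hbij s * gen op hbij (op s t) = gen op hbij t * gen op hbij (op t s) := by
  ext i
  · show ee s i + ee (op s t) (op s i) = ee t i + ee (op t s) (op t i)
    have h1 : ee (op s t) (op s i) = ee t i := by
      simp only [ee]
      by_cases h : i = t
      · subst h; simp
      · rw [if_neg h, if_neg (fun hc => h ((hbij s).1 hc))]
    have h2 : ee (op t s) (op t i) = ee s i := by
      simp only [ee]
      by_cases h : i = s
      · subst h; simp
      · rw [if_neg h, if_neg (fun hc => h ((hbij t).1 hc))]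
    rw [h1, h2, add_comm]
  · show ((psi op hbij s).trans (psi op hbij (op s t))) i =
        ((psi op hbij t).trans (psi op hbij (op t s))) i
    rw [psi_braid op hbij hcs]

noncomputable def Phi : StructureMonoid op →* GM S :=
  Con.lift _ (FreeMonoid.lift (gen op hbij)) (Con.conGen_le.mpr (by
    rintro x y ⟨s, t, rfl, rfl⟩
    simp only [Con.ker_rel, map_mul, FreeMonoid.lift_eval_of]
    exact gen_rel op hbij hcs s t))

lemma Phi_coe (w : FreeMonoid S) : Phi op hbij hcs (↑w) = FreeMonoid.lift (gen op hbij) w :=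
  Con.lift_coe _ w

lemma Phi_mkM (s : S) : Phi op hbij hcs (mkM op s) = gen op hbij s := by
  have : mkM op s = ((FreeMonoid.of s : FreeMonoid S) : StructureMonoid op) := rfl
  rw [this, Phi_coe]
  rfl


/-- weight of a vector -/
def wt (a : S → ℕ) : ℕ := ∑ s, a s

/-- left-quotient of a vector by a generator -/
noncomputable def red (t : S) (a : S → ℕ) : S → ℕ :=
  fun j => a ((psi op hbij t).symm j) - ee t ((psi op hbij t).symm j)

lemma red_psi (t : S) (a : S → ℕ) (i : S) :
    red op hbij t a (psi op hbij t i) = a i - ee t i := by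
  simp [red]

lemma ee_add_red (t : S) (a : S → ℕ) (ht : a t ≠ 0) (i : S) :
    ee t i + red op hbij t a (psi op hbij t i) = a i := by
  rw [red_psi]
  simp only [ee]
  by_cases h : i = t
  · subst h; simp; omega
  · simp [h]

lemma wt_red (t : S) (a : S → ℕ) (ht : a t ≠ 0) :
    wt a = 1 + wt (red op hbij t a) := by
  have h1 : wt (red op hbij t a) = ∑ i, red op hbij t a (psi op hbij t i) :=
    (Equiv.sum_comp (psi op hbij t) _).symm
  have h2 : wt a = ∑ i, (ee t i + red op hbij t a (psi op hbij t i)) :=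
    Finset.sum_congr rfl (fun i _ => (ee_add_red op hbij t a ht i).symm)
  rw [h2, Finset.sum_add_distrib, ← h1]
  congr 1
  simp [ee]

lemma wt_pos (a : S → ℕ) (s : S) (hs : a s ≠ 0) : a s ≤ wt a :=
  Finset.single_le_sum (fun i _ => Nat.zero_le _) (Finset.mem_univ s)

lemma wt_eq_zero {a : S → ℕ} (h : wt a = 0) (s : S) : a s = 0 := by
  by_contra hs
  have := wt_pos a s hs
  omega

/-- normal form with fuel -/
noncomputable def Jf : ℕ → (S → ℕ) → StructureMonoid op
  | 0, _ => 1
  | n + 1, a =>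
      if h : ∃ t, a t ≠ 0 then
        mkM op h.choose * Jf n (red op hbij h.choose a)
      else 1

lemma Jf_zero : ∀ (n : ℕ) (a : S → ℕ), wt a = 0 → Jf op hbij n a = 1
  | 0, _, _ => rfl
  | n + 1, a, h => by
    rw [Jf, dif_neg]
    push_neg
    exact wt_eq_zero h

lemma Jf_congr : ∀ (n m : ℕ) (a : S → ℕ), wt a ≤ n → wt a ≤ m →
    Jf op hbij n a = Jf op hbij m a := by
  intro n
  induction n with
  | zero => intro m a h _; rw [Jf_zero op hbij 0 a (Nat.le_zero.mp h),
      Jf_zero op hbij m a (Nat.le_zero.mp h)]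
  | succ n ih =>
    intro m a hn hm
    match m with
    | 0 => rw [Jf_zero op hbij _ a (Nat.le_zero.mp hm),
        Jf_zero op hbij 0 a (Nat.le_zero.mp hm)]
    | m + 1 =>
      by_cases h : ∃ t, a t ≠ 0
      · rw [Jf, Jf, dif_pos h, dif_pos h]
        have hw := wt_red op hbij h.choose a h.choose_spec
        exact congrArg _ (ih m _ (by omega) (by omega))
      · rw [Jf, Jf, dif_neg h, dif_neg h]

/-- normal form -/
noncomputable def J (a : S → ℕ) : StructureMonoid op := Jf op hbij (wt a) a

lemma J_eq_Jf (n : ℕ) (a : S → ℕ) (h : wt a ≤ n) : J op hbij a = Jf op hbij n a :=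
  Jf_congr op hbij _ n a le_rfl h

lemma J_unfold (a : S → ℕ) (h : ∃ t, a t ≠ 0) :
    J op hbij a = mkM op h.choose * J op hbij (red op hbij h.choose a) := by
  have hw := wt_red op hbij h.choose a h.choose_spec
  rw [J_eq_Jf op hbij (wt (red op hbij h.choose a) + 1) a (by omega), Jf, dif_pos h]
  rfl

lemma rel_mk (s t : S) :
    mkM op s * mkM op (op s t) = mkM op t * mkM op (op t s) := by
  have h : (conGen (csRel op)) (FreeMonoid.of s * FreeMonoid.of (op s t))
      (FreeMonoid.of t * FreeMonoid.of (op t s)) :=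
    ConGen.Rel.of _ _ ⟨s, t, rfl, rfl⟩
  calc mkM op s * mkM op (op s t)
      = (conGen (csRel op)).mk' (FreeMonoid.of s * FreeMonoid.of (op s t)) :=
        (map_mul _ _ _).symm
    _ = (conGen (csRel op)).mk' (FreeMonoid.of t * FreeMonoid.of (op t s)) :=
        (Con.eq _).mpr h
    _ = mkM op t * mkM op (op t s) := map_mul _ _ _

include hcs in
lemma red_red (s t : S) (a : S → ℕ) :
    red op hbij (op s t) (red op hbij s a) = red op hbij (op t s) (red op hbij t a) := by
  funext j
  have hx : ((psi op hbij s).trans (psi op hbij (op s t))).symm j =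
      ((psi op hbij t).trans (psi op hbij (op t s))).symm j := by
    rw [psi_braid op hbij hcs]
  simp only [Equiv.symm_trans_apply] at hx
  have key : ∀ u v : S, red op hbij (op u v) (red op hbij u a) j =
      a ((psi op hbij u).symm ((psi op hbij (op u v)).symm j)) -
        ee u ((psi op hbij u).symm ((psi op hbij (op u v)).symm j)) -
        ee v ((psi op hbij u).symm ((psi op hbij (op u v)).symm j)) := by
    intro u v
    simp only [red]
    congr 1
    simp only [ee]
    have : (psi op hbij (op u v)).symm j = op u v ↔
        (psi op hbij u).symm ((psi op hbij (op u v)).symm j) = v := by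
      constructor
      · intro h; rw [h]; exact (psi op hbij u).symm_apply_apply v
      · intro h
        have := congrArg (psi op hbij u) h
        rw [(psi op hbij u).apply_symm_apply] at this
        rw [this]; rfl
    by_cases h : (psi op hbij (op u v)).symm j = op u v
    · rw [if_pos h, if_pos (this.mp h)]
    · rw [if_neg h, if_neg (fun hc => h (this.mpr hc))]
  rw [key s t, key t s, hx]
  omega

include hcs in
lemma exchange : ∀ (n : ℕ) (a : S → ℕ), wt a ≤ n → ∀ s, a s ≠ 0 →
    J op hbij a = mkM op s * J op hbij (red op hbij s a) := by
  intro n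
  induction n with
  | zero =>
    intro a h s hs
    exact absurd (Nat.le_zero.mp h) (fun hc => hs (wt_eq_zero hc s))
  | succ n ih =>
    intro a ha s hs
    have h : ∃ t, a t ≠ 0 := ⟨s, hs⟩
    set t := h.choose with hts
    have ht : a t ≠ 0 := h.choose_spec
    rw [J_unfold op hbij a h]
    by_cases hst : s = t
    · rw [hst]
    · have hwa := wt_red op hbij s a hs
      have hwb := wt_red op hbij t a ht
      have h0 : ee s t = 0 := if_neg (fun hc : t = s => hst hc.symm)
      have h1 : ee t s = 0 := if_neg hst
      have hb : red op hbij s a (psi op hbij s t) ≠ 0 := by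
        rw [red_psi, h0]; omega
      have hb' : red op hbij t a (psi op hbij t s) ≠ 0 := by
        rw [red_psi, h1]; omega
      rw [ih (red op hbij s a) (by omega) (psi op hbij s t) hb,
        ih (red op hbij t a) (by omega) (psi op hbij t s) hb',
        ← mul_assoc, ← mul_assoc, psi_apply, psi_apply, ← rel_mk op s t,
        red_red op hbij hcs s t a]


lemma J_zero (a : S → ℕ) (h : wt a = 0) : J op hbij a = 1 := Jf_zero op hbij _ a h

include hcs in
lemma vec_J : ∀ (n : ℕ) (a : S → ℕ), wt a ≤ n → (Phi op hbij hcs (J op hbij a)).vec = a := by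
  intro n
  induction n with
  | zero =>
    intro a ha
    rw [J_zero op hbij a (Nat.le_zero.mp ha), map_one]
    funext i
    exact ((wt_eq_zero (Nat.le_zero.mp ha) i).symm)
  | succ n ih =>
    intro a ha
    by_cases h : ∃ t, a t ≠ 0
    · rw [J_unfold op hbij a h, map_mul, Phi_mkM]
      have hw := wt_red op hbij h.choose a h.choose_spec
      rw [mul_vec']
      funext i
      show ee h.choose i + _ = a i
      rw [ih (red op hbij h.choose a) (by omega)]
      show ee h.choose i + red op hbij h.choose a ((gen op hbij h.choose).perm i) = a i
      exact ee_add_red op hbij h.choose a h.choose_spec i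
    · push_neg at h
      have : wt a = 0 := Finset.sum_eq_zero (fun i _ => h i)
      rw [J_zero op hbij a this, map_one]
      funext i
      exact (h i).symm

include hcs in
lemma vec_J' (a : S → ℕ) : (Phi op hbij hcs (J op hbij a)).vec = a :=
  vec_J op hbij hcs (wt a) a le_rfl

include hcs in
lemma J_vec : ∀ g : StructureMonoid op, J op hbij ((Phi op hbij hcs g).vec) = g := by
  intro g
  induction g using Con.induction_on with
  | H w =>
    induction w using FreeMonoid.inductionOn' with
    | one =>
      show J op hbij ((Phi op hbij hcs 1).vec) = 1
      rw [map_one]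
      exact J_zero op hbij _ (by simp [wt, one_vec'])
    | of_mul s w ihw =>
      rw [Con.coe_mul]
      have hg : ((FreeMonoid.of s : FreeMonoid S) : StructureMonoid op) = mkM op s := rfl
      rw [hg, map_mul, Phi_mkM, mul_vec']
      set v := (Phi op hbij hcs (↑w)).vec with hv
      have hs : (fun i => (gen op hbij s).vec i + v ((gen op hbij s).perm i)) s ≠ 0 := by
        show ee s s + v (psi op hbij s s) ≠ 0
        simp [ee]
      have hred : red op hbij s (fun i => (gen op hbij s).vec i + v ((gen op hbij s).perm i))
          = v := by
        funext j
        show (fun i => ee s i + v (psi op hbij s i)) ((psi op hbij s).symm j)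
            - ee s ((psi op hbij s).symm j) = v j
        simp only
        rw [(psi op hbij s).apply_symm_apply]
        omega
      rw [exchange op hbij hcs (wt _) _ le_rfl s hs, hred, ihw]

include hcs in
lemma vec_inj {g h : StructureMonoid op}
    (hgh : (Phi op hbij hcs g).vec = (Phi op hbij hcs h).vec) : g = h := by
  rw [← J_vec op hbij hcs g, hgh, J_vec op hbij hcs h]


open Polynomial in
/-- the monomial matrix attached to a `GM` element -/
noncomputable def mono (m : GM S) : Matrix S S (Polynomial ℚ) :=
  Matrix.diagonal (fun i => X ^ m.vec i) * Pmat (Polynomial ℚ) m.perm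

lemma Pmat_mul_Pmat {R : Type*} [Semiring R] (σ τ : Equiv.Perm S) :
    Pmat R σ * Pmat R τ = Pmat R (σ.trans τ) := by
  ext i k
  simp only [Pmat, Matrix.mul_apply, Matrix.of_apply]
  rw [Finset.sum_eq_single (σ i)]
  · simp [Equiv.trans_apply]; exact if_congr Iff.rfl rfl rfl
  · intro j _ hj
    rw [if_neg hj, zero_mul]
  · intro hmem
    exact absurd (Finset.mem_univ _) hmem

lemma Pmat_mul_diagonal {R : Type*} [Semiring R] [DecidableEq S] (σ : Equiv.Perm S) (d : S → R) :
    Pmat R σ * Matrix.diagonal d = Matrix.diagonal (fun i => d (σ i)) * Pmat R σ := by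
  ext i k
  simp only [Pmat, Matrix.mul_apply, Matrix.of_apply, Matrix.diagonal]
  rw [Finset.sum_eq_single (σ i), Finset.sum_eq_single i]
  · simp only [Matrix.of_apply, if_pos rfl]
    by_cases h : k = σ i
    · subst h; simp
    · simp [h, Ne.symm h]
  · intro j _ hj
    simp [Matrix.of_apply, Ne.symm hj]
  · intro hmem; exact absurd (Finset.mem_univ _) hmem
  · intro j _ hj
    simp [Matrix.of_apply, hj]
  · intro hmem; exact absurd (Finset.mem_univ _) hmem

lemma Pmat_refl {R : Type*} [Semiring R] : Pmat R (Equiv.refl S) = 1 := by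
  ext i k
  simp only [Pmat, Matrix.of_apply, Equiv.refl_apply, Matrix.one_apply]
  by_cases h : i = k
  · subst h; simp
  · simp [h, Ne.symm h]

open Polynomial in
lemma mono_mul (a b : GM S) : mono (a * b) = mono a * mono b := by
  simp only [mono, mul_vec', mul_perm']
  rw [mul_assoc, ← mul_assoc (Pmat (Polynomial ℚ) a.perm), Pmat_mul_diagonal,
    mul_assoc, Pmat_mul_Pmat, ← mul_assoc, Matrix.diagonal_mul_diagonal]
  have hfun : (fun i => (X : Polynomial ℚ) ^ (a.vec i + b.vec (a.perm i)))
      = fun i => (X : Polynomial ℚ) ^ a.vec i * X ^ b.vec (a.perm i) := by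
    funext i; rw [pow_add]
  rw [hfun]

open Polynomial in
lemma mono_one : mono (1 : GM S) = 1 := by
  simp only [mono, one_vec', one_perm', pow_zero, Pmat_refl, Matrix.diagonal_one, one_mul]

open Polynomial in
include hcs in
lemma theta_eq (Θ : StructureMonoid op →* Matrix S S (Polynomial ℚ))
    (hΘ : ∀ s : S, Θ (mkM op s) = theta op hbij s) :
    ∀ g : StructureMonoid op, Θ g = mono (Phi op hbij hcs g) := by
  intro g
  induction g using Con.induction_on with
  | H w =>
    induction w using FreeMonoid.inductionOn' with
    | one =>
      show Θ 1 = mono (Phi op hbij hcs 1)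
      rw [map_one, map_one, mono_one]
    | of_mul s w ihw =>
      rw [Con.coe_mul]
      have hg : ((FreeMonoid.of s : FreeMonoid S) : StructureMonoid op) = mkM op s := rfl
      rw [hg, map_mul, map_mul, mono_mul, ihw, hΘ]
      congr 1
      rw [Phi_mkM]
      have hD : Dmat s = Matrix.diagonal (fun i => (X : Polynomial ℚ) ^ (ee s i)) := by
        unfold Dmat
        congr 1
        funext t
        simp only [ee]
        by_cases h : t = s
        · subst h; simp
        · simp [h]
      show Dmat s * Pmat (Polynomial ℚ) (psi op hbij s) = _
      rw [hD]
      rfl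


lemma diagonal_mul_Pmat_apply {R : Type*} [Semiring R] [DecidableEq S] (f : S → R)
    (σ : Equiv.Perm S) (i j : S) :
    (Matrix.diagonal f * Pmat R σ) i j = if j = σ i then f i else 0 := by
  simp only [Matrix.mul_apply, Matrix.diagonal, Pmat, Matrix.of_apply]
  rw [Finset.sum_eq_single i]
  · simp only [Matrix.of_apply, if_pos rfl]
    by_cases h : j = σ i
    · simp [h]
    · simp [h]
  · intro k _ hk
    simp [Matrix.of_apply, Ne.symm hk]
  · intro hmem; exact absurd (Finset.mem_univ _) hmem

open Polynomial in
include hcs in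
lemma vec_Delta (Θ : StructureMonoid op →* Matrix S S (Polynomial ℚ))
    (hΘ : ∀ s : S, Θ (mkM op s) = theta op hbij s)
    (Δ : StructureMonoid op) (σΔ : Equiv.Perm S)
    (hΔ : Θ Δ = Matrix.diagonal (fun _ => (X : Polynomial ℚ)) * Pmat (Polynomial ℚ) σΔ) :
    (Phi op hbij hcs Δ).vec = fun _ => 1 := by
  have h := (theta_eq op hbij hcs Θ hΘ Δ).symm.trans hΔ
  funext i
  set m := Phi op hbij hcs Δ with hm
  have hentry := congrFun (congrFun h i) (m.perm i)
  rw [show (mono m) i (m.perm i) = (X : Polynomial ℚ) ^ m.vec i by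
      rw [mono, diagonal_mul_Pmat_apply, if_pos rfl],
    diagonal_mul_Pmat_apply] at hentry
  by_cases hc : m.perm i = σΔ i
  · rw [if_pos hc] at hentry
    have := congrArg natDegree hentry
    rwa [natDegree_X_pow, natDegree_X] at this
  · rw [if_neg hc] at hentry
    exact absurd hentry (pow_ne_zero _ X_ne_zero)

section Final

variable (Δ : StructureMonoid op)

/-- the complement of a divisor -/
noncomputable def compl (g : StructureMonoid op) : StructureMonoid op :=
  J op hbij (fun j => 1 - (Phi op hbij hcs g).vec ((Phi op hbij hcs g).perm.symm j))

include hcs in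
lemma compl_spec (hΔv : (Phi op hbij hcs Δ).vec = fun _ => 1)
    (g : StructureMonoid op) (hg : ∀ i, (Phi op hbij hcs g).vec i ≤ 1) :
    Δ = g * compl op hbij hcs g := by
  apply vec_inj op hbij hcs
  rw [map_mul, mul_vec', hΔv]
  funext i
  rw [compl, vec_J' op hbij hcs]
  show (1 : ℕ) = (Phi op hbij hcs g).vec i +
    (1 - (Phi op hbij hcs g).vec ((Phi op hbij hcs g).perm.symm ((Phi op hbij hcs g).perm i)))
  rw [(Phi op hbij hcs g).perm.symm_apply_apply]
  have := hg i
  omega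

include hcs in
lemma mem_div_iff (hΔv : (Phi op hbij hcs Δ).vec = fun _ => 1) (g : StructureMonoid op) :
    (∃ h, Δ = g * h) ↔ ∀ i, (Phi op hbij hcs g).vec i ≤ 1 := by
  constructor
  · rintro ⟨h, rfl⟩ i
    have h2 := congrFun hΔv i
    rw [map_mul, mul_vec'] at h2
    simp only at h2
    omega
  · intro hg
    exact ⟨compl op hbij hcs g, compl_spec op hbij hcs Δ hΔv g hg⟩

include hcs in
lemma mem_rdiv_iff (hΔv : (Phi op hbij hcs Δ).vec = fun _ => 1) (g : StructureMonoid op) :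
    (∃ h, Δ = h * g) ↔ ∀ i, (Phi op hbij hcs g).vec i ≤ 1 := by
  constructor
  · rintro ⟨h, rfl⟩ i
    have h2 := congrFun hΔv ((Phi op hbij hcs h).perm.symm i)
    rw [map_mul, mul_vec'] at h2
    simp only [(Phi op hbij hcs h).perm.apply_symm_apply] at h2
    omega
  · intro hg
    set σ := (Phi op hbij hcs Δ).perm with hσ
    set x := J op hbij (fun i => (Phi op hbij hcs g).vec (σ i)) with hxdef
    have hvx : (Phi op hbij hcs x).vec = fun i => (Phi op hbij hcs g).vec (σ i) :=
      vec_J' op hbij hcs _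
    have hx1 : ∀ i, (Phi op hbij hcs x).vec i ≤ 1 := by
      intro i; rw [hvx]; exact hg (σ i)
    set y := compl op hbij hcs x with hydef
    have hxy : Δ = x * y := compl_spec op hbij hcs Δ hΔv x hx1
    have hvy : (Phi op hbij hcs y).vec =
        fun j => 1 - (Phi op hbij hcs x).vec ((Phi op hbij hcs x).perm.symm j) :=
      vec_J' op hbij hcs _
    have hy1 : ∀ i, (Phi op hbij hcs y).vec i ≤ 1 := by
      intro i; rw [hvy]; exact Nat.sub_le _ _
    have hperm : σ = (Phi op hbij hcs x).perm.trans (Phi op hbij hcs y).perm := by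
      rw [hσ, hxy, map_mul, mul_perm']
    refine ⟨y, ?_⟩
    have hfinal : Δ = y * compl op hbij hcs y := compl_spec op hbij hcs Δ hΔv y hy1
    have hcg : compl op hbij hcs y = g := by
      apply vec_inj op hbij hcs
      rw [compl, vec_J' op hbij hcs]
      funext j
      have hps : (Phi op hbij hcs x).perm (σ.symm j) = (Phi op hbij hcs y).perm.symm j := by
        rw [hperm]
        simp only [Equiv.symm_trans_apply]
        rw [(Phi op hbij hcs x).perm.apply_symm_apply]
      have e1 : (Phi op hbij hcs y).vec ((Phi op hbij hcs y).perm.symm j)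
          = 1 - (Phi op hbij hcs x).vec (σ.symm j) := by
        simp only [hvy]
        rw [← hps, (Phi op hbij hcs x).perm.symm_apply_apply]
      have e2 : (Phi op hbij hcs x).vec (σ.symm j) = (Phi op hbij hcs g).vec j := by
        simp only [hvx]
        rw [σ.apply_symm_apply]
      show 1 - (Phi op hbij hcs y).vec ((Phi op hbij hcs y).perm.symm j) = _
      rw [e1, e2]
      have := hg j
      omega
    rw [hcg] at hfinal
    exact hfinal

include hcs in
lemma div_eq_image (hΔv : (Phi op hbij hcs Δ).vec = fun _ => 1) :
    {g : StructureMonoid op | ∃ h, Δ = g * h} =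
      J op hbij '' {a : S → ℕ | ∀ i, a i ≤ 1} := by
  ext g
  simp only [Set.mem_setOf_eq, Set.mem_image]
  rw [show (∃ h, Δ = g * h) ↔ _ from mem_div_iff op hbij hcs Δ hΔv g]
  constructor
  · intro hg
    exact ⟨(Phi op hbij hcs g).vec, hg, J_vec op hbij hcs g⟩
  · rintro ⟨a, ha, rfl⟩ i
    rw [vec_J' op hbij hcs]
    exact ha i

include hcs in
lemma closure_top (hΔv : (Phi op hbij hcs Δ).vec = fun _ => 1) :
    Submonoid.closure {g : StructureMonoid op | ∃ h, Δ = g * h} = ⊤ := by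
  rw [eq_top_iff]
  intro g _
  induction g using Con.induction_on with
  | H w =>
    induction w using FreeMonoid.inductionOn' with
    | one =>
      show ((1 : FreeMonoid S) : StructureMonoid op) ∈ _
      have : ((1 : FreeMonoid S) : StructureMonoid op) = 1 := rfl
      rw [this]
      exact one_mem _
    | of_mul s w ih =>
      rw [Con.coe_mul]
      have hg : ((FreeMonoid.of s : FreeMonoid S) : StructureMonoid op) = mkM op s := rfl
      rw [hg]
      refine mul_mem (Submonoid.subset_closure ?_) (ih trivial)
      rw [Set.mem_setOf_eq, show (∃ h, Δ = mkM op s * h) ↔ _ from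
        mem_div_iff op hbij hcs Δ hΔv (mkM op s)]
      intro i
      rw [Phi_mkM]
      show ee s i ≤ 1
      unfold ee
      by_cases h : i = s <;> simp [h]

end Final

include hcs in
lemma J_injective : Function.Injective (J op hbij) := by
  intro a b h
  rw [← vec_J' op hbij hcs a, ← vec_J' op hbij hcs b, h]

/-- the finset of 0-1 vectors -/
def Bf (S : Type*) [Fintype S] [DecidableEq S] : Finset (S → ℕ) :=
  Finset.image (fun f : S → Fin 2 => fun s => (f s : ℕ)) Finset.univ

lemma coe_Bf : (↑(Bf S) : Set (S → ℕ)) = {a : S → ℕ | ∀ i, a i ≤ 1} := by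
  ext a
  simp only [Bf, Finset.coe_image, Finset.coe_univ, Set.image_univ, Set.mem_range,
    Set.mem_setOf_eq]
  constructor
  · rintro ⟨f, rfl⟩ i
    exact Nat.lt_succ_iff.mp (f i).isLt
  · intro ha
    exact ⟨fun i => ⟨a i, Nat.lt_succ_of_le (ha i)⟩, rfl⟩

lemma card_Bf : (Bf S).card = 2 ^ Fintype.card S := by
  rw [Bf, Finset.card_image_of_injective _ (fun f g h => funext fun s =>
    Fin.val_injective (congrFun h s)), Finset.card_univ]
  simp [Fintype.card_fun]

end GarAux

/-- The element `Δ` with diagonal part `diag(q,…,q)` is a Garside element of the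
structure monoid: it is balanced, its set of (left) divisors is finite of cardinality
`2^n`, and its divisors generate the monoid. -/
theorem Garside_element {S : Type*} [Fintype S] [DecidableEq S] (op : S → S → S)
    (hbij : ∀ s : S, Function.Bijective (op s))
    (hcs : ∀ s t u : S, op (op s t) (op s u) = op (op t s) (op t u))
    (Θ : StructureMonoid op →* Matrix S S (Polynomial ℚ))
    (hΘ : ∀ s : S, Θ (mkM op s) = theta op hbij s)
    (Δ : StructureMonoid op) (σΔ : Equiv.Perm S)
    (hΔ : Θ Δ = Matrix.diagonal (fun _ => (Polynomial.X : Polynomial ℚ)) *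
      Pmat (Polynomial ℚ) σΔ) :
    {g : StructureMonoid op | ∃ h, Δ = g * h} = {g : StructureMonoid op | ∃ h, Δ = h * g} ∧
    {g : StructureMonoid op | ∃ h, Δ = g * h}.Finite ∧
    {g : StructureMonoid op | ∃ h, Δ = g * h}.ncard = 2 ^ Fintype.card S ∧
    Submonoid.closure {g : StructureMonoid op | ∃ h, Δ = g * h} = ⊤ := by
  have hΔv := GarAux.vec_Delta op hbij hcs Θ hΘ Δ σΔ hΔ
  refine ⟨?_, ?_, ?_, GarAux.closure_top op hbij hcs Δ hΔv⟩
  · ext g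
    simp only [Set.mem_setOf_eq]
    rw [GarAux.mem_div_iff op hbij hcs Δ hΔv g, GarAux.mem_rdiv_iff op hbij hcs Δ hΔv g]
  · rw [GarAux.div_eq_image op hbij hcs Δ hΔv, ← GarAux.coe_Bf]
    exact (GarAux.Bf S).finite_toSet.image _
  · rw [GarAux.div_eq_image op hbij hcs Δ hΔv, ← GarAux.coe_Bf,
      Set.ncard_image_of_injective _ (GarAux.J_injective op hbij hcs),
      Set.ncard_coe_finset, GarAux.card_Bf]
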